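/- Let n ≥ 3, let A be a real n×2 matrix with orthonormal columns (AᵀA = I₂), and suppose the squares of the rows of A take exactly three distinct values, occurring with multiplicities p, q, r > 0 (p + q + r = n) and having Euclidean magnitudes 1/(2n) + 1/(2p), 1/(2n) + 1/(2q) and 1/(2n) + 1/(2r) respectively. Then every 2×2 submatrix A_{ij} formed by two distinct rows of A satisfies σ₂(A_{ij}) ≤ 1/√n, and this bound is attained for some pair i ≠ j. -/

import Mathlib

open Matrix Finset

/-- Euclidean norm on ℝ². -/
noncomputable def enorm2 (v : Fin 2 → ℝ) : ℝ := Real.sqrt (v 0 ^ 2 + v 1 ^ 2)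

/-- Euclidean inner product on ℝ². -/
def inner2 (u v : Fin 2 → ℝ) : ℝ := u 0 * v 0 + u 1 * v 1

/-- The square of a vector in ℝ², defined as for complex numbers:
`(ξ, η) ↦ (ξ² − η², 2ξη)`. -/
def vsq (v : Fin 2 → ℝ) : Fin 2 → ℝ := ![v 0 ^ 2 - v 1 ^ 2, 2 * v 0 * v 1]

/-- The largest singular value of a 2×2 real matrix (explicit closed form:
the singular values squared are the eigenvalues of `BᵀB`, which has trace
`tr(BᵀB)` and determinant `det(B)²`). -/
noncomputable def sigma1 (B : Matrix (Fin 2) (Fin 2) ℝ) : ℝ :=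
  Real.sqrt (((Bᵀ * B).trace + Real.sqrt ((Bᵀ * B).trace ^ 2 - 4 * B.det ^ 2)) / 2)

/-- The smallest singular value of a 2×2 real matrix. -/
noncomputable def sigma2 (B : Matrix (Fin 2) (Fin 2) ℝ) : ℝ :=
  Real.sqrt (((Bᵀ * B).trace - Real.sqrt ((Bᵀ * B).trace ^ 2 - 4 * B.det ^ 2)) / 2)

/-- The 2×2 submatrix of an n×2 matrix formed by rows `i` and `j`. -/
def rowPair {n : ℕ} (A : Matrix (Fin n) (Fin 2) ℝ) (i j : Fin n) :
    Matrix (Fin 2) (Fin 2) ℝ :=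
  !![A i 0, A i 1; A j 0, A j 1]

set_option maxHeartbeats 1000000

lemma enorm2_sq (v : Fin 2 → ℝ) : enorm2 v ^ 2 = v 0 ^ 2 + v 1 ^ 2 := by
  rw [enorm2, Real.sq_sqrt]; positivity

lemma enorm2_vsq (v : Fin 2 → ℝ) : enorm2 (vsq v) = v 0 ^ 2 + v 1 ^ 2 := by
  unfold enorm2 vsq
  simp only [Matrix.cons_val_zero, Matrix.cons_val_one, Matrix.head_cons]
  rw [show (v 0 ^ 2 - v 1 ^ 2) ^ 2 + (2 * v 0 * v 1) ^ 2 = (v 0 ^2 + v 1 ^2)^2 by ring]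
  exact Real.sqrt_sq (by positivity)

lemma sigma2_rowPair {n : ℕ} (A : Matrix (Fin n) (Fin 2) ℝ) (i j : Fin n) :
    sigma2 (rowPair A i j) =
      Real.sqrt ((enorm2 (vsq (A i)) + enorm2 (vsq (A j))
        - enorm2 (vsq (A i) + vsq (A j))) / 2) := by
  have htr : ((rowPair A i j)ᵀ * rowPair A i j).trace
      = (A i 0 ^ 2 + A i 1 ^ 2) + (A j 0 ^ 2 + A j 1 ^ 2) := by
    simp [Matrix.trace, Matrix.mul_apply, Fin.sum_univ_two, rowPair, Matrix.diag, Matrix.vecHead, Matrix.vecTail]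
    ring
  have hdet : (rowPair A i j).det = A i 0 * A j 1 - A i 1 * A j 0 := by
    simp [rowPair, Matrix.det_fin_two]
  have hs : Real.sqrt (((rowPair A i j)ᵀ * rowPair A i j).trace ^ 2
      - 4 * (rowPair A i j).det ^ 2) = enorm2 (vsq (A i) + vsq (A j)) := by
    rw [htr, hdet, enorm2]
    congr 1
    simp [vsq, Pi.add_apply]
    ring
  rw [sigma2, hs, htr, enorm2_vsq, enorm2_vsq]

lemma key (P Q R : ℝ) (hP : 0 < P) (hQ : 0 < Q) (hR : 0 < R)
    (x y z : Fin 2 → ℝ)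
    (hx : enorm2 x = 1 / (2 * (P+Q+R)) + 1 / (2 * P))
    (hy : enorm2 y = 1 / (2 * (P+Q+R)) + 1 / (2 * Q))
    (hz : enorm2 z = 1 / (2 * (P+Q+R)) + 1 / (2 * R))
    (hsum : ∀ k, P * x k + Q * y k + R * z k = 0) :
    enorm2 (x + y) = enorm2 x + enorm2 y - 2 / (P+Q+R) := by
  have hN : (0:ℝ) < P + Q + R := by linarith
  have h1 : x 0 ^ 2 + x 1 ^ 2 = (1 / (2 * (P+Q+R)) + 1 / (2 * P))^2 := by
    rw [← enorm2_sq, hx]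
  have h2 : y 0 ^ 2 + y 1 ^ 2 = (1 / (2 * (P+Q+R)) + 1 / (2 * Q))^2 := by
    rw [← enorm2_sq, hy]
  have h3 : z 0 ^ 2 + z 1 ^ 2 = (1 / (2 * (P+Q+R)) + 1 / (2 * R))^2 := by
    rw [← enorm2_sq, hz]
  field_simp at h1 h2 h3
  have h1' : 4*(P+Q+R)^2*P^2*(x 0 ^ 2 + x 1 ^ 2) = ((P+Q+R)+P)^2 := by
    linear_combination h1
  have h2' : 4*(P+Q+R)^2*Q^2*(y 0 ^ 2 + y 1 ^ 2) = ((P+Q+R)+Q)^2 := by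
    linear_combination h2
  have h3' : 4*(P+Q+R)^2*R^2*(z 0 ^ 2 + z 1 ^ 2) = ((P+Q+R)+R)^2 := by
    linear_combination h3
  have h3'' : 4*(P+Q+R)^2*((P*x 0 + Q*y 0)^2 + (P*x 1 + Q*y 1)^2) = ((P+Q+R)+R)^2 := by
    linear_combination h3' + 4*(P+Q+R)^2*((P*x 0 + Q*y 0 - R*z 0)*(hsum 0) + (P*x 1 + Q*y 1 - R*z 1)*(hsum 1))
  have hd : 8*(P+Q+R)^2*P*Q*(x 0 * y 0 + x 1 * y 1)
      = ((P+Q+R)+R)^2 - ((P+Q+R)+P)^2 - ((P+Q+R)+Q)^2 := by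
    linear_combination h3'' - h1' - h2'
  have hrw : 1 / (2 * (P+Q+R)) + 1 / (2 * P) + (1 / (2 * (P+Q+R)) + 1 / (2 * Q)) - 2/(P+Q+R)
      = ((P+Q+R)*(P+Q) - 2*P*Q)/(2*(P+Q+R)*P*Q) := by
    field_simp
    ring
  have hnum : (0:ℝ) ≤ (P+Q+R)*(P+Q) - 2*P*Q := by nlinarith [sq_nonneg (P-Q)]
  have hfin : (x 0 + y 0)^2 + (x 1 + y 1)^2
      = (((P+Q+R)*(P+Q) - 2*P*Q)/(2*(P+Q+R)*P*Q))^2 := by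
    rw [div_pow, eq_div_iff (by positivity)]
    linear_combination Q^2*h1' + P^2*h2' + P*Q*hd
  rw [hx, hy, hrw, enorm2]
  simp only [Pi.add_apply]
  rw [hfin]
  exact Real.sqrt_sq (by positivity)

/-- cross-cluster sigma value -/
lemma cross_val (w1 w2 : Fin 2 → ℝ) (N : ℝ) (hN : 0 < N)
    (h : enorm2 (w1 + w2) = enorm2 w1 + enorm2 w2 - 2/N) :
    Real.sqrt ((enorm2 w1 + enorm2 w2 - enorm2 (w1 + w2)) / 2) = 1 / Real.sqrt N := by
  rw [h, show (enorm2 w1 + enorm2 w2 - (enorm2 w1 + enorm2 w2 - 2/N))/2 = 1/N by ring]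
  rw [one_div, one_div, Real.sqrt_inv]

lemma same_val (w : Fin 2 → ℝ) :
    Real.sqrt ((enorm2 w + enorm2 w - enorm2 (w + w)) / 2) = 0 := by
  have : enorm2 (w + w) = 2 * enorm2 w := by
    rw [enorm2, enorm2, Pi.add_apply, Pi.add_apply,
      show (w 0 + w 0)^2 + (w 1 + w 1)^2 = 4 * (w 0 ^2 + w 1 ^2) by ring,
      show (4:ℝ) = 2^2 by norm_num, Real.sqrt_mul (by positivity), Real.sqrt_sq (by norm_num)]
  rw [this, show (enorm2 w + enorm2 w - 2 * enorm2 w)/2 = 0 by ring, Real.sqrt_zero]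


/-- sufficiency of the three-cluster structure: every 2×2
submatrix has `σ₂ ≤ 1/√n`, and the bound is attained. -/
theorem cluster_structure_sufficient (n : ℕ) (hn : 3 ≤ n)
    (A : Matrix (Fin n) (Fin 2) ℝ) (hA : Aᵀ * A = 1)
    (hcluster :
      ∃ p q r : ℕ, 0 < p ∧ 0 < q ∧ 0 < r ∧ p + q + r = n ∧
        ∃ x y z : Fin 2 → ℝ, x ≠ y ∧ x ≠ z ∧ y ≠ z ∧
          (∀ i : Fin n, vsq (A i) = x ∨ vsq (A i) = y ∨ vsq (A i) = z) ∧
          (Finset.univ.filter (fun i : Fin n => vsq (A i) = x)).card = p ∧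
          (Finset.univ.filter (fun i : Fin n => vsq (A i) = y)).card = q ∧
          (Finset.univ.filter (fun i : Fin n => vsq (A i) = z)).card = r ∧
          enorm2 x = 1 / (2 * n) + 1 / (2 * p) ∧
          enorm2 y = 1 / (2 * n) + 1 / (2 * q) ∧
          enorm2 z = 1 / (2 * n) + 1 / (2 * r)
    ) :
    (∀ i j : Fin n, i ≠ j → sigma2 (rowPair A i j) ≤ 1 / Real.sqrt n) ∧
      ∃ i j : Fin n, i ≠ j ∧ sigma2 (rowPair A i j) = 1 / Real.sqrt n := by
  classical
  obtain ⟨p, q, r, hp, hq, hr, hpqr, x, y, z, hxy, hxz, hyz, hmem, hcx, hcy, hcz, hex, hey, hez⟩ := hcluster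
  have hnR : (0:ℝ) < (n:ℝ) := by positivity
  have hcast : (n:ℝ) = (p:ℝ) + q + r := by
    rw [← hpqr]; push_cast; ring
  -- column orthonormality in coordinates
  have h00 : ∑ i, A i 0 * A i 0 = 1 := by
    have := congrFun (congrFun hA 0) 0
    simpa [Matrix.mul_apply, Matrix.one_apply, Matrix.transpose_apply] using this
  have h11 : ∑ i, A i 1 * A i 1 = 1 := by
    have := congrFun (congrFun hA 1) 1
    simpa [Matrix.mul_apply, Matrix.one_apply, Matrix.transpose_apply] using this
  have h01 : ∑ i, A i 0 * A i 1 = 0 := by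
    have := congrFun (congrFun hA 0) 1
    simpa [Matrix.mul_apply, Matrix.one_apply, Matrix.transpose_apply] using this
  have hsum0 : ∀ k : Fin 2, ∑ i, vsq (A i) k = 0 := by
    intro k
    fin_cases k
    · show ∑ i : Fin n, (A i 0 ^ 2 - A i 1 ^ 2) = 0
      rw [Finset.sum_sub_distrib]
      have e0 : ∑ i, A i 0 ^ 2 = 1 := by rw [← h00]; congr 1; ext i; ring
      have e1 : ∑ i, A i 1 ^ 2 = 1 := by rw [← h11]; congr 1; ext i; ring
      rw [e0, e1]; ring
    · show ∑ i : Fin n, (2 * A i 0 * A i 1) = 0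
      rw [show (∑ i : Fin n, (2 * A i 0 * A i 1)) = 2 * ∑ i, A i 0 * A i 1 by
        rw [Finset.mul_sum]; congr 1; ext i; ring, h01]
      ring
  -- sum over clusters
  set Sx := Finset.univ.filter (fun i : Fin n => vsq (A i) = x) with hSx
  set Sy := Finset.univ.filter (fun i : Fin n => vsq (A i) = y) with hSy
  set Sz := Finset.univ.filter (fun i : Fin n => vsq (A i) = z) with hSz
  have hdxy : Disjoint Sx Sy := by
    rw [Finset.disjoint_left]
    intro i hi hj
    rw [hSx, Finset.mem_filter] at hi
    rw [hSy, Finset.mem_filter] at hj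
    exact hxy (hi.2 ▸ hj.2)
  have hdxz : Disjoint Sx Sz := by
    rw [Finset.disjoint_left]
    intro i hi hj
    rw [hSx, Finset.mem_filter] at hi
    rw [hSz, Finset.mem_filter] at hj
    exact hxz (hi.2 ▸ hj.2)
  have hdyz : Disjoint Sy Sz := by
    rw [Finset.disjoint_left]
    intro i hi hj
    rw [hSy, Finset.mem_filter] at hi
    rw [hSz, Finset.mem_filter] at hj
    exact hyz (hi.2 ▸ hj.2)
  have hunion : Sx ∪ Sy ∪ Sz = Finset.univ := by
    ext i
    simp only [Finset.mem_union, hSx, hSy, hSz, Finset.mem_filter, Finset.mem_univ, true_and,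
      iff_true]
    rcases hmem i with h | h | h
    · exact Or.inl (Or.inl h)
    · exact Or.inl (Or.inr h)
    · exact Or.inr h
  have hvec : ∀ k : Fin 2, (p:ℝ) * x k + (q:ℝ) * y k + (r:ℝ) * z k = 0 := by
    intro k
    have hsplit : ∑ i, vsq (A i) k = (∑ i ∈ Sx, vsq (A i) k) + (∑ i ∈ Sy, vsq (A i) k)
        + (∑ i ∈ Sz, vsq (A i) k) := by
      rw [← hunion, Finset.sum_union (by exact Finset.disjoint_union_left.mpr ⟨hdxz, hdyz⟩),
        Finset.sum_union hdxy]
    have ex : ∑ i ∈ Sx, vsq (A i) k = (p:ℝ) * x k := by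
      have : ∑ i ∈ Sx, vsq (A i) k = ∑ _i ∈ Sx, x k :=
        Finset.sum_congr rfl (fun i hi => by
          rw [hSx, Finset.mem_filter] at hi; rw [hi.2])
      rw [this, Finset.sum_const, hcx, nsmul_eq_mul]
    have ey : ∑ i ∈ Sy, vsq (A i) k = (q:ℝ) * y k := by
      have : ∑ i ∈ Sy, vsq (A i) k = ∑ _i ∈ Sy, y k :=
        Finset.sum_congr rfl (fun i hi => by
          rw [hSy, Finset.mem_filter] at hi; rw [hi.2])
      rw [this, Finset.sum_const, hcy, nsmul_eq_mul]
    have ez : ∑ i ∈ Sz, vsq (A i) k = (r:ℝ) * z k := by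
      have : ∑ i ∈ Sz, vsq (A i) k = ∑ _i ∈ Sz, z k :=
        Finset.sum_congr rfl (fun i hi => by
          rw [hSz, Finset.mem_filter] at hi; rw [hi.2])
      rw [this, Finset.sum_const, hcz, nsmul_eq_mul]
    rw [← ex, ← ey, ← ez, ← hsplit, hsum0]
  have hpR : (0:ℝ) < (p:ℝ) := by exact_mod_cast hp
  have hqR : (0:ℝ) < (q:ℝ) := by exact_mod_cast hq
  have hrR : (0:ℝ) < (r:ℝ) := by exact_mod_cast hr
  -- the three cross identities
  have hex' : enorm2 x = 1 / (2 * ((p:ℝ)+q+r)) + 1 / (2 * (p:ℝ)) := by rw [← hcast]; exact hex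
  have hey' : enorm2 y = 1 / (2 * ((p:ℝ)+q+r)) + 1 / (2 * (q:ℝ)) := by rw [← hcast]; exact hey
  have hez' : enorm2 z = 1 / (2 * ((p:ℝ)+q+r)) + 1 / (2 * (r:ℝ)) := by rw [← hcast]; exact hez
  have Kxy : enorm2 (x + y) = enorm2 x + enorm2 y - 2 / (n:ℝ) := by
    rw [hcast]
    exact key _ _ _ hpR hqR hrR x y z hex' hey' hez' hvec
  have Kxz : enorm2 (x + z) = enorm2 x + enorm2 z - 2 / (n:ℝ) := by
    rw [hcast]
    have := key (p:ℝ) (r:ℝ) (q:ℝ) hpR hrR hqR x z y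
      (by rw [hex']; ring_nf) (by rw [hez']; ring_nf) (by rw [hey']; ring_nf)
      (fun k => by linear_combination hvec k)
    rw [this]; ring_nf
  have Kyz : enorm2 (y + z) = enorm2 y + enorm2 z - 2 / (n:ℝ) := by
    rw [hcast]
    have := key (q:ℝ) (r:ℝ) (p:ℝ) hqR hrR hpR y z x
      (by rw [hey']; ring_nf) (by rw [hez']; ring_nf) (by rw [hex']; ring_nf)
      (fun k => by linear_combination hvec k)
    rw [this]; ring_nf
  -- symmetric versions
  have Kyx : enorm2 (y + x) = enorm2 y + enorm2 x - 2 / (n:ℝ) := by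
    rw [add_comm y x, Kxy]; ring
  have Kzx : enorm2 (z + x) = enorm2 z + enorm2 x - 2 / (n:ℝ) := by
    rw [add_comm z x, Kxz]; ring
  have Kzy : enorm2 (z + y) = enorm2 z + enorm2 y - 2 / (n:ℝ) := by
    rw [add_comm z y, Kyz]; ring
  have hval : ∀ i j : Fin n, vsq (A i) ≠ vsq (A j) →
      sigma2 (rowPair A i j) = 1 / Real.sqrt n := by
    intro i j hne
    rw [sigma2_rowPair]
    rcases hmem i with hi | hi | hi <;> rcases hmem j with hj | hj | hj <;>
      rw [hi, hj] <;>
      first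
        | (exact absurd (hi.trans hj.symm) hne)
        | (exact cross_val _ _ _ hnR Kxy)
        | (exact cross_val _ _ _ hnR Kxz)
        | (exact cross_val _ _ _ hnR Kyz)
        | (exact cross_val _ _ _ hnR Kyx)
        | (exact cross_val _ _ _ hnR Kzx)
        | (exact cross_val _ _ _ hnR Kzy)
  constructor
  · intro i j hij
    by_cases hvs : vsq (A i) = vsq (A j)
    · rw [sigma2_rowPair, hvs, same_val]
      positivity
    · exact le_of_eq (hval i j hvs)
  · -- attainment: pick i in Sx, j in Sy
    have hxne : Sx.Nonempty := by
      rw [← Finset.card_pos, hcx]; exact hp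
    have hyne : Sy.Nonempty := by
      rw [← Finset.card_pos, hcy]; exact hq
    obtain ⟨i, hi⟩ := hxne
    obtain ⟨j, hj⟩ := hyne
    rw [hSx, Finset.mem_filter] at hi
    rw [hSy, Finset.mem_filter] at hj
    have hne : vsq (A i) ≠ vsq (A j) := by rw [hi.2, hj.2]; exact hxy
    refine ⟨i, j, fun h => hne (by rw [h]), hval i j hne⟩
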